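/- For 0 < i < v(G), the coefficient c_i(G) of the characteristic polynomial of G satisfies c_i(G) = (1/(v(G)-i)) Σ_{u ∈ V(G)} c_i(G-u). -/

import Mathlib

open SimpleGraph
open scoped Classical

open Polynomial Matrix Finset Equiv in
private lemma derivative_finset_prod' {ι R : Type*} [DecidableEq ι] [CommRing R]
    (s : Finset ι) (f : ι → Polynomial R) :
    derivative (∏ i ∈ s, f i) = ∑ i ∈ s, (∏ j ∈ s.erase i, f j) * derivative (f i) := by
  have h := Polynomial.derivative_prod (s := s.val) (f := f)
  rw [Finset.prod_eq_multiset_prod, h, Finset.sum_eq_multiset_sum]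
  congr 1

open Polynomial Matrix Finset Equiv in
private lemma derivative_charmatrix_det {n : Type*} [Fintype n] [DecidableEq n] {R : Type*}
    [CommRing R] (M : Matrix n n R) :
    derivative (charmatrix M).det
      = ∑ u : n, ((charmatrix M).submatrix
          (fun a : {v : n // v ≠ u} => (a : n)) (fun a : {v : n // v ≠ u} => (a : n))).det := by
  set A := charmatrix M with hA
  have hder : ∀ i j : n, derivative (A i j) = if i = j then 1 else 0 := by
    intro i j
    by_cases h : i = j
    · subst h; rw [hA, charmatrix_apply_eq]; simp
    · rw [hA, charmatrix_apply_ne _ _ _ h]; simp [h]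
  rw [det_apply, map_sum]
  have step1 : ∀ σ : Equiv.Perm n,
      derivative (Equiv.Perm.sign σ • ∏ i, A (σ i) i)
        = ∑ u : n, Equiv.Perm.sign σ •
            ((∏ i ∈ Finset.univ.erase u, A (σ i) i) * if σ u = u then 1 else 0) := by
    intro σ
    rw [Units.smul_def, map_zsmul, derivative_finset_prod']
    rw [Finset.smul_sum]
    refine Finset.sum_congr rfl fun u _ => ?_
    rw [hder (σ u) u, Units.smul_def]
  simp only [step1]
  rw [Finset.sum_comm]
  refine Finset.sum_congr rfl fun u _ => ?_
  rw [det_apply]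
  rw [← Finset.sum_filter_of_ne (p := fun σ : Equiv.Perm n => σ u = u)
    (by intro σ _ h; by_contra hne; apply h; simp [hne])]
  refine Finset.sum_bij'
    (fun (σ : Equiv.Perm n) (hσ : σ ∈ Finset.univ.filter fun σ : Equiv.Perm n => σ u = u) =>
      σ.subtypePerm (p := fun v => v ≠ u) (fun v => by
        have hσu : σ u = u := (Finset.mem_filter.mp hσ).2
        constructor
        · exact fun hv hc => hv (by rw [hc, hσu])
        · exact fun hv hc => hv (σ.injective (hc.trans hσu.symm))))
    (fun τ _ => Equiv.Perm.ofSubtype τ) ?_ ?_ ?_ ?_ ?_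
  · intro σ hσ; exact Finset.mem_univ _
  · intro τ _
    refine Finset.mem_filter.mpr ⟨Finset.mem_univ _, ?_⟩
    exact Equiv.Perm.ofSubtype_apply_of_not_mem τ (by simp)
  · intro σ hσ
    apply Equiv.Perm.ofSubtype_subtypePerm
    intro x hx hxu
    subst hxu
    exact hx (Finset.mem_filter.mp hσ).2
  · intro τ _
    exact Equiv.Perm.subtypePerm_ofSubtype τ
  · intro σ hσ
    have hσu : σ u = u := (Finset.mem_filter.mp hσ).2
    beta_reduce
    rw [if_pos hσu, mul_one,
      Equiv.Perm.sign_subtypePerm (p := fun v => v ≠ u) σ _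
        (fun x (hx : σ x ≠ x) (hxu : x = u) => hx (by rw [hxu, hσu]))]
    congr 1
    rw [Finset.prod_subtype (Finset.univ.erase u) (p := fun v => v ≠ u) (by simp)]
    rfl

open Polynomial Matrix in
private lemma charmatrix_submatrix' {m n : Type*} [Fintype n] [DecidableEq n]
    [Fintype m] [DecidableEq m] {R : Type*} [CommRing R]
    (M : Matrix n n R) (f : m → n) (hf : Function.Injective f) :
    (charmatrix M).submatrix f f = charmatrix (M.submatrix f f) := by
  ext i j
  by_cases h : i = j
  · subst h; simp [charmatrix_apply_eq]
  · rw [Matrix.submatrix_apply, charmatrix_apply_ne _ _ _ (fun hc => h (hf hc)),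
      charmatrix_apply_ne _ _ _ h, Matrix.submatrix_apply]

/-- The characteristic polynomial `P(G;λ) = det(λI - A(G))`. -/
noncomputable def charPolyGraph {V : Type} [Fintype V] (G : SimpleGraph V) :
    Polynomial ℤ :=
  Matrix.charpoly (G.adjMatrix ℤ)

/-- Writing `P(G;λ) = Σ_i c_i(G) λ^{v(G)-i}`, for `0 < i < v(G)`:
`(v(G) - i) · c_i(G) = Σ_{u ∈ V(G)} c_i(G-u)`, where `c_i(G-u)` is the
coefficient of `λ^{v(G)-1-i}` in `P(G-u;λ)`. -/
theorem coeff_kelly {V : Type} [Fintype V] (G : SimpleGraph V)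
    (i : ℕ) (h0 : 0 < i) (hi : i < Fintype.card V) :
    ((Fintype.card V - i : ℕ) : ℤ) * (charPolyGraph G).coeff (Fintype.card V - i)
      = ∑ u : V, (charPolyGraph (G.induce {v : V | v ≠ u})).coeff
          (Fintype.card V - 1 - i) := by
  have key : Polynomial.derivative (charPolyGraph G)
      = ∑ u : V, charPolyGraph (G.induce {v : V | v ≠ u}) := by
    show Polynomial.derivative (Matrix.charpoly (G.adjMatrix ℤ)) = _
    rw [Matrix.charpoly, derivative_charmatrix_det]
    refine Finset.sum_congr rfl fun u _ => ?_
    rw [charmatrix_submatrix' _ _ Subtype.val_injective]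
    have hadj : (SimpleGraph.adjMatrix ℤ (G.induce {v : V | v ≠ u}))
        = (G.adjMatrix ℤ).submatrix (fun a : {v : V // v ≠ u} => (a : V))
            (fun a : {v : V // v ≠ u} => (a : V)) := by
      ext a b
      simp [Matrix.submatrix_apply, SimpleGraph.adjMatrix_apply, SimpleGraph.comap_adj]
    unfold charPolyGraph Matrix.charpoly
    rw [← hadj]
    convert rfl using 3
    all_goals (ext; simp)
  have hc : (Fintype.card V - 1 - i) + 1 = Fintype.card V - i := by omega
  have h1 : (Polynomial.derivative (charPolyGraph G)).coeff (Fintype.card V - 1 - i)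
      = ∑ u : V, (charPolyGraph (G.induce {v : V | v ≠ u})).coeff
          (Fintype.card V - 1 - i) := by
    rw [key, Polynomial.finset_sum_coeff]
  rw [Polynomial.coeff_derivative, hc] at h1
  rw [← h1, mul_comm]
  congr 1
  push_cast [hc]
  omega
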